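/- Let F : Fin n × Fin n × Fin n × Fin n → ℂ be a super-symmetric fourth-order tensor and suppose F = Σ_{i=1}^{r} A^i ⊗ A^i, where each A^i is an n × n complex matrix of the form A^i = Σ_{j=1}^{m_i} a^{i,j} (a^{i,j})ᵀ with vectors a^{i,j} ∈ ℂ^n and m_i ≤ n. Then the following entrywise identity holds: F = Σ_{i=1}^{r} Σ_{j=1}^{m_i} a^{i,j} ⊗ a^{i,j} ⊗ a^{i,j} ⊗ a^{i,j} + Σ_{i=1}^{r} Σ_{j≠k} (1/3)·( a^{i,j} ⊗ a^{i,j} ⊗ a^{i,k} ⊗ a^{i,k} + a^{i,j} ⊗ a^{i,k} ⊗ a^{i,j} ⊗ a^{i,k} + a^{i,j} ⊗ a^{i,k} ⊗ a^{i,k} ⊗ a^{i,j} ). -/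

import Mathlib

/-- Lemma: if a super-symmetric fourth-order tensor satisfies `F = ∑ᵢ Aⁱ ⊗ Aⁱ` with
`Aⁱ = ∑ⱼ aⁱʲ (aⁱʲ)ᵀ` and `mᵢ ≤ n`, then entrywise
`F = ∑ᵢ∑ⱼ aⁱʲ⊗aⁱʲ⊗aⁱʲ⊗aⁱʲ + ∑ᵢ∑_{j≠k} (1/3)(aⁱʲ⊗aⁱʲ⊗aⁱᵏ⊗aⁱᵏ + aⁱʲ⊗aⁱᵏ⊗aⁱʲ⊗aⁱᵏ + aⁱʲ⊗aⁱᵏ⊗aⁱᵏ⊗aⁱʲ)`. -/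
theorem stmt_13 {n r : ℕ} {m : Fin r → ℕ} (hm : ∀ i, m i ≤ n)
    (F : Fin n × Fin n × Fin n × Fin n → ℂ)
    (hsym : ∀ σ : Equiv.Perm (Fin 4), ∀ i : Fin 4 → Fin n,
      F (i (σ 0), i (σ 1), i (σ 2), i (σ 3)) = F (i 0, i 1, i 2, i 3))
    (a : (i : Fin r) → Fin (m i) → Fin n → ℂ)
    (A : Fin r → Matrix (Fin n) (Fin n) ℂ)
    (hA : ∀ i, A i = ∑ j : Fin (m i), Matrix.vecMulVec (a i j) (a i j))
    (hF : ∀ w x y z : Fin n, F (w, x, y, z) = ∑ i, A i w x * A i y z) :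
    ∀ w x y z : Fin n,
      F (w, x, y, z) =
        (∑ i, ∑ j, a i j w * a i j x * a i j y * a i j z) +
        ∑ i, ∑ j, ∑ k ∈ Finset.univ.erase j,
          (1 / 3 : ℂ) *
            (a i j w * a i j x * a i k y * a i k z
              + a i j w * a i k x * a i j y * a i k z
              + a i j w * a i k x * a i k y * a i j z) := by
  intro w x y z
  have h1 : F (w, y, x, z) = F (w, x, y, z) := by
    have := hsym (Equiv.swap 1 2) ![w, x, y, z]
    simpa [Equiv.swap_apply_def] using this
  have h2 : F (w, z, y, x) = F (w, x, y, z) := by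
    have := hsym (Equiv.swap 1 3) ![w, x, y, z]
    simpa [Equiv.swap_apply_def] using this
  have key : ∀ u v s t : Fin n,
      F (u, v, s, t) = ∑ i, ∑ j, ∑ k, a i j u * a i j v * a i k s * a i k t := by
    intro u v s t
    rw [hF]
    refine Finset.sum_congr rfl fun i _ => ?_
    rw [hA]
    simp only [Matrix.sum_apply, Matrix.vecMulVec_apply, Finset.sum_mul_sum]
    refine Finset.sum_congr rfl fun j _ => Finset.sum_congr rfl fun k _ => by ring
  have h : F (w, x, y, z)
      = (1/3 : ℂ) * (F (w, x, y, z) + F (w, y, x, z) + F (w, z, y, x)) := by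
    rw [h1, h2]; ring
  rw [h, key w x y z, key w y x z, key w z y x,
    ← Finset.sum_add_distrib, ← Finset.sum_add_distrib, Finset.mul_sum,
    ← Finset.sum_add_distrib]
  refine Finset.sum_congr rfl fun i _ => ?_
  rw [← Finset.sum_add_distrib, ← Finset.sum_add_distrib, Finset.mul_sum,
    ← Finset.sum_add_distrib]
  refine Finset.sum_congr rfl fun j _ => ?_
  rw [← Finset.add_sum_erase _ _ (Finset.mem_univ j),
      ← Finset.add_sum_erase _ (fun k => a i j w * a i j y * a i k x * a i k z)
        (Finset.mem_univ j),
      ← Finset.add_sum_erase _ (fun k => a i j w * a i j z * a i k y * a i k x)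
        (Finset.mem_univ j)]
  have e2 : ∑ k ∈ Finset.univ.erase j, a i j w * a i j y * a i k x * a i k z
      = ∑ k ∈ Finset.univ.erase j, a i j w * a i k x * a i j y * a i k z :=
    Finset.sum_congr rfl fun k _ => by ring
  have e3 : ∑ k ∈ Finset.univ.erase j, a i j w * a i j z * a i k y * a i k x
      = ∑ k ∈ Finset.univ.erase j, a i j w * a i k x * a i k y * a i j z :=
    Finset.sum_congr rfl fun k _ => by ring
  rw [e2, e3]
  simp only [mul_add, Finset.sum_add_distrib, ← Finset.mul_sum]
  ring
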